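/- arXiv:1906.02652 — 2 statements merged into one kernel-verified Lean document; each statement's English description precedes it below -/
import Mathlib

section
/- Let p be a probability distribution on a finite set X of size N and let q be calibrated with respect to p (i.e., for every t, the set B_t = {x : q_x = t} satisfies q(B_t) = p(B_t)). Then for every x in X, q_x ≥ p_x / N. -/
open Classical in
/-- If `q` is calibrated with respect to `p` on a finite set of size `N`,
then `q x ≥ p x / N` for every `x`. -/
theorem stmt_0 {X : Type*} [Fintype X] (N : ℕ) (hN : Fintype.card X = N)
    (p q : X → ℝ)
    (hp0 : ∀ x, 0 ≤ p x) (hp1 : ∑ x, p x = 1)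
    (hq0 : ∀ x, 0 ≤ q x) (hq1 : ∑ x, q x = 1)
    (hcal : ∀ t : ℝ,
      ∑ x, (if q x = t then q x else 0) = ∑ x, (if q x = t then p x else 0)) :
    ∀ x, p x / N ≤ q x := by
  classical
  intro x
  set t := q x with ht
  have hcalt := hcal t
  set B : Finset X := Finset.univ.filter (fun y => q y = t) with hB
  have hL : ∑ y, (if q y = t then q y else 0) = (B.card : ℝ) * t := by
    rw [← Finset.sum_filter]
    rw [show ∑ y ∈ B, q y = ∑ y ∈ B, t from
      Finset.sum_congr rfl (fun y hy => (Finset.mem_filter.mp hy).2)]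
    simp [mul_comm]
  have hR : ∑ y, (if q y = t then p y else 0) = ∑ y ∈ B, p y := by
    rw [← Finset.sum_filter]
  have hxB : x ∈ B := by simp [hB, ht]
  have hpx : p x ≤ ∑ y ∈ B, p y :=
    Finset.single_le_sum (fun y _ => hp0 y) hxB
  have hcard : (B.card : ℝ) ≤ (N : ℝ) := by
    have h1 : B.card ≤ Fintype.card X := Finset.card_le_univ B
    rw [hN] at h1
    exact_mod_cast h1
  have ht0 : 0 ≤ t := hq0 x
  have hNpos : (0 : ℝ) < N := by
    have : 0 < Fintype.card X := Fintype.card_pos_iff.mpr ⟨x⟩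
    exact_mod_cast hN ▸ this
  rw [div_le_iff₀ hNpos]
  calc p x ≤ ∑ y ∈ B, p y := hpx
    _ = (B.card : ℝ) * t := by rw [← hR, ← hcalt, hL]
    _ = t * (B.card : ℝ) := mul_comm _ _
    _ ≤ t * N := mul_le_mul_of_nonneg_left hcard ht0
    _ = q x * N := rfl
end

section
/- The quadratic loss is not strongly proper in ℓ₁ norm: for every β > 0 there exist N and distributions p, q on a set of size N with ‖p−q‖₁ = ε > 0 such that ℓ(q;p) − ℓ(p;p) = ε²/(2N) < (β/2)ε². Concretely, taking q uniform and p_x = (1±ε)/N on two halves, the difference in expected quadratic loss is (1/2)‖p−q‖₂² = ε²/(2N). -/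
open Finset

lemma ql_inner_sum {N : ℕ} (q : Fin N → ℝ) (x : Fin N) :
    ∑ y, ((if y = x then (1 : ℝ) else 0) - q y) ^ 2
      = 1 - 2 * q x + ∑ y, (q y) ^ 2 := by
  have : ∀ y : Fin N, ((if y = x then (1 : ℝ) else 0) - q y) ^ 2
      = (if y = x then (1 : ℝ) else 0) - 2 * ((if y = x then q y else 0)) + (q y)^2 := by
    intro y
    by_cases h : y = x <;> simp [h] <;> try ring
  simp only [this, Finset.sum_add_distrib, Finset.sum_sub_distrib,
    Finset.sum_ite_eq', Finset.mem_univ, if_true]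
  rw [← Finset.mul_sum, Finset.sum_ite_eq' Finset.univ x q]
  simp

lemma ql_expected_loss {N : ℕ} (p q : Fin N → ℝ) (hp : ∑ x, p x = 1) :
    ∑ x, p x * ((1 / 2) * ∑ y, ((if y = x then (1 : ℝ) else 0) - q y) ^ 2)
      = (1 / 2) * (1 - 2 * ∑ x, p x * q x + ∑ y, (q y) ^ 2) := by
  have h : ∀ x, p x * ((1 / 2) * ∑ y, ((if y = x then (1 : ℝ) else 0) - q y) ^ 2)
      = (1/2) * (p x - 2 * (p x * q x) + p x * ∑ y, (q y)^2) := by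
    intro x; rw [ql_inner_sum]; ring
  simp only [h]
  rw [← Finset.mul_sum]
  simp only [Finset.sum_add_distrib, Finset.sum_sub_distrib, ← Finset.mul_sum, hp,
    ← Finset.sum_mul]
  ring

/-- The quadratic loss is not strongly proper in the ℓ₁ norm: for every `β > 0`
there are distributions `p, q` on a set of size `N` with `‖p - q‖₁ = ε > 0` such
that the gap in expected quadratic loss is `ε²/(2N) < (β/2) ε²`. -/
theorem stmt_14 :
    ∀ β : ℝ, 0 < β →
      ∃ (N : ℕ) (p q : Fin N → ℝ) (ε : ℝ),
        0 < N ∧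
        (∀ x, 0 ≤ p x) ∧ (∑ x, p x = 1) ∧
        (∀ x, 0 ≤ q x) ∧ (∑ x, q x = 1) ∧
        0 < ε ∧ (∑ x, |p x - q x|) = ε ∧
        (∑ x, p x * ((1 / 2) * ∑ y, ((if y = x then (1 : ℝ) else 0) - q y) ^ 2))
          - (∑ x, p x * ((1 / 2) * ∑ y, ((if y = x then (1 : ℝ) else 0) - p y) ^ 2))
          = ε ^ 2 / (2 * N) ∧
        ε ^ 2 / (2 * N) < β / 2 * ε ^ 2 := by
  intro β hβ
  set n : ℕ := ⌈β⁻¹⌉₊ + 1 with hn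
  set N : ℕ := 2 * n with hNdef
  have hn0 : 0 < n := Nat.succ_pos _
  have hN0 : 0 < N := by omega
  have hNR : (0:ℝ) < (N:ℝ) := by exact_mod_cast hN0
  refine ⟨N, fun x => if (x:ℕ) < n then (2:ℝ)/N else 0, fun _ => 1/N, 1, hN0, ?_, ?_, ?_, ?_, ?_, ?_, ?_, ?_⟩
  · intro x; dsimp only; split <;> positivity
  · -- sum p = 1
    rw [Fin.sum_univ_eq_sum_range (fun i => if i < n then (2:ℝ)/N else 0)]
    rw [← Finset.sum_filter]
    have hfil : (Finset.range N).filter (fun i => i < n) = Finset.range n := by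
      ext i; simp only [Finset.mem_filter, Finset.mem_range]; omega
    rw [hfil, Finset.sum_const, Finset.card_range, nsmul_eq_mul]
    field_simp
    push_cast [hNdef]
    ring
  · intro x; positivity
  · rw [Finset.sum_const, Finset.card_univ, Fintype.card_fin, nsmul_eq_mul]
    field_simp
  · norm_num
  · -- ∑ |p - q| = 1
    have habs : ∀ x : Fin N, |(if (x:ℕ) < n then (2:ℝ)/N else 0) - 1/N| = 1/N := by
      intro x
      split
      · rw [show (2:ℝ)/N - 1/N = 1/N by ring, abs_of_nonneg (by positivity)]
      · rw [zero_sub, abs_neg, abs_of_nonneg (by positivity)]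
    simp only [habs]
    rw [Finset.sum_const, Finset.card_univ, Fintype.card_fin, nsmul_eq_mul]
    field_simp
  · -- the gap
    set p : Fin N → ℝ := fun x => if (x:ℕ) < n then (2:ℝ)/N else 0 with hpdef
    set q : Fin N → ℝ := fun _ => 1/N with hqdef
    have hp1 : ∑ x, p x = 1 := by
      rw [hpdef, Fin.sum_univ_eq_sum_range (fun i => if i < n then (2:ℝ)/N else 0),
        ← Finset.sum_filter]
      have hfil : (Finset.range N).filter (fun i => i < n) = Finset.range n := by
        ext i; simp only [Finset.mem_filter, Finset.mem_range]; omega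
      rw [hfil, Finset.sum_const, Finset.card_range, nsmul_eq_mul]
      field_simp
      push_cast [hNdef]
      ring
    rw [ql_expected_loss p q hp1, ql_expected_loss p p hp1]
    have hpq : ∑ x, p x * q x = 1 / N := by
      simp only [hqdef]
      rw [← Finset.sum_mul, hp1, one_mul]
    have hq2 : ∑ y, (q y) ^ 2 = 1 / N := by
      simp only [hqdef]
      rw [Finset.sum_const, Finset.card_univ, Fintype.card_fin, nsmul_eq_mul]
      field_simp
    have hp2 : ∑ y, (p y) ^ 2 = 2 / N := by
      simp only [hpdef]
      have : ∀ y : Fin N, (if (y:ℕ) < n then (2:ℝ)/N else 0)^2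
          = if (y:ℕ) < n then ((2:ℝ)/(N:ℝ))^2 else 0 := by
        intro y; split <;> simp
      simp only [this]
      rw [Fin.sum_univ_eq_sum_range (fun i => if i < n then ((2:ℝ)/N)^2 else 0),
        ← Finset.sum_filter]
      have hfil : (Finset.range N).filter (fun i => i < n) = Finset.range n := by
        ext i; simp only [Finset.mem_filter, Finset.mem_range]; omega
      rw [hfil, Finset.sum_const, Finset.card_range, nsmul_eq_mul]
      have hnN : (N:ℝ) = 2 * n := by push_cast [hNdef]; ring
      field_simp [hnN]
      ring
      linarith [hnN]
    have hpp : ∑ x, p x * p x = 2 / N := by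
      have := hp2; simp only [pow_two] at this; exact this
    rw [hpq, hq2, hp2, hpp]
    field_simp
    ring
  · -- 1/(2N) < β/2
    have h1 : (β⁻¹ : ℝ) < n := lt_of_le_of_lt (Nat.le_ceil _) (by exact_mod_cast Nat.lt_succ_self _)
    have h2 : (n:ℝ) ≤ N := by exact_mod_cast Nat.le_of_lt (by omega)
    have h3 : β⁻¹ < (N:ℝ) := lt_of_lt_of_le h1 h2
    have h4 : 1 < β * N := by
      have := mul_lt_mul_of_pos_left h3 hβ
      rwa [mul_inv_cancel₀ (ne_of_gt hβ)] at this
    rw [one_pow]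
    rw [div_lt_iff₀ (by positivity)]
    nlinarith
end
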